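/- Let T be a contraction on H and for λ ∈ ℂ set W_λ := {(x, λx) : x ∈ H} ⊆ H × H. Then for every λ with |λ| < 1 (so that Id − λT* is boundedly invertible), W_λ ∩ A_T^⊥s = {((Id − λT*)⁻¹f, λ(Id − λT*)⁻¹f) : f ∈ K^⊥}. -/

import Mathlib

open scoped InnerProductSpace
open ContinuousLinearMap

/-- Let `T` be a contraction on `H`, `K = ker(Id − T*T)`,
`A_T = {(x,Tx) : x ∈ K}`, and `W_λ = {(x, λx)}`. For `|λ| < 1` (so that
`Id − λT*` is boundedly invertible, its inverse being `Ring.inverse`),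
`W_λ ∩ A_T^⊥s = {((Id − λT*)⁻¹f, λ(Id − λT*)⁻¹f) : f ∈ K^⊥}`, where `A_T^⊥s`
is the symplectic orthogonal of `A_T` with respect to the standard symplectic
form (inner products linear in the first variable). -/
theorem weyl_fiber_in_disc
    {H : Type*} [NormedAddCommGroup H] [InnerProductSpace ℂ H] [CompleteSpace H]
    (T : H →L[ℂ] H) (hT : ‖T‖ ≤ 1)
    (K Ks : Submodule ℂ H)
    (hK : K = LinearMap.ker (((1 - adjoint T ∘L T : H →L[ℂ] H) : H →ₗ[ℂ] H)))
    (hKs : Ks = LinearMap.ker (((1 - T ∘L adjoint T : H →L[ℂ] H) : H →ₗ[ℂ] H)))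
    (ATs : Set (H × H))
    (hATs : ATs = {a : H × H | ∀ b ∈ {p : H × H | ∃ x ∈ K, p = (x, T x)},
      Complex.I * ⟪b.1, a.1⟫_ℂ - Complex.I * ⟪b.2, a.2⟫_ℂ = 0})
    (lam : ℂ) (hlam : ‖lam‖ < 1) :
    {p : H × H | ∃ x : H, p = (x, lam • x)} ∩ ATs
      = {p : H × H | ∃ f ∈ Kᗮ,
          p = (Ring.inverse (1 - lam • adjoint T) f,
                lam • Ring.inverse (1 - lam • adjoint T) f)} := by
  subst hATs
  set A : H →L[ℂ] H := 1 - lam • adjoint T with hA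
  have hnorm : ‖lam • adjoint T‖ < 1 := by
    rw [norm_smul]
    have hadj : ‖adjoint T‖ = ‖T‖ := by
      simpa using (LinearIsometryEquiv.norm_map (ContinuousLinearMap.adjoint (𝕜 := ℂ) (E := H) (F := H)) T)
    rw [hadj]
    calc ‖lam‖ * ‖T‖ ≤ ‖lam‖ * 1 := by
          exact mul_le_mul_of_nonneg_left hT (norm_nonneg _)
      _ = ‖lam‖ := mul_one _
      _ < 1 := by simpa using hlam
  have hU : IsUnit A := (Units.oneSub _ hnorm).isUnit
  have hAiA : ∀ x : H, Ring.inverse A (A x) = x := by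
    intro x
    have h := Ring.inverse_mul_cancel A hU
    calc Ring.inverse A (A x) = (Ring.inverse A * A) x := rfl
      _ = x := by rw [h]; rfl
  have hAAi : ∀ f : H, A (Ring.inverse A f) = f := by
    intro f
    have h := Ring.mul_inverse_cancel A hU
    calc A (Ring.inverse A f) = (A * Ring.inverse A) f := rfl
      _ = f := by rw [h]; rfl
  have key : ∀ k x : H, Complex.I * ⟪k, x⟫_ℂ - Complex.I * ⟪T k, lam • x⟫_ℂ
      = Complex.I * ⟪k, A x⟫_ℂ := by
    intro k x
    simp only [hA, ContinuousLinearMap.sub_apply, ContinuousLinearMap.one_apply,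
      ContinuousLinearMap.smul_apply, inner_sub_right, inner_smul_right,
      adjoint_inner_right]
    ring
  ext p
  constructor
  · rintro ⟨⟨x, rfl⟩, hmem⟩
    refine ⟨A x, ?_, ?_⟩
    · rw [Submodule.mem_orthogonal]
      intro k hk
      have h1 := hmem (k, T k) ⟨k, hk, rfl⟩
      simp only at h1
      have h2 : Complex.I * ⟪k, A x⟫_ℂ = 0 := by rw [← key k x]; exact h1
      exact (mul_eq_zero.mp h2).resolve_left Complex.I_ne_zero
    · rw [hAiA]
  · rintro ⟨f, hf, rfl⟩
    refine ⟨⟨Ring.inverse A f, rfl⟩, ?_⟩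
    rintro b ⟨k, hk, rfl⟩
    simp only
    rw [key k (Ring.inverse A f), hAAi f]
    rw [(Submodule.mem_orthogonal K f).mp hf k hk]
    ring
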